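/- Let 0 < κ < 1, M > 0, R > 0 and let x₀, m̄, m̂ be unit vectors in ℝⁿ with positive n-th coordinates, m̄·x₀ ≥ κ, m̂·x₀ ≥ κ, and |x₀′|/x₀ₙ ≤ R/M (where x₀ = (x₀′, x₀ₙ)). Let X₀ ∈ ℝⁿ with X₀ = |X₀|x₀ and Xₙ⁰ < M, and suppose Ȳ = X₀ + s̄m̄ and Ŷ = X₀ + ŝm̂ satisfy Ȳₙ = Ŷₙ = M, |Ȳ′| ≤ R, |Ŷ′| ≤ R. Let m = (1/κ)x₀ + β̄(m̄ − (1/κ)x₀) + β̂(m̂ − (1/κ)x₀) be a unit vector with β̄, β̂ ≥ 0, β̄ + β̂ ≤ 1, and mₙ > 0. Then the point Y = X₀ + ((M − Xₙ⁰)/mₙ)·m satisfies Yₙ = M and |Y′| ≤ R. -/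

import Mathlib

open scoped RealInnerProductSpace

/-- The norm `|Y′|` of the vector of the first `n` coordinates of `Y ∈ ℝ^{n+1}`. -/
noncomputable def primeNorm {n : ℕ} (Y : EuclideanSpace ℝ (Fin (n + 1))) : ℝ :=
  Real.sqrt (∑ i : Fin n, (Y i.castSucc) ^ 2)

/-- The vector of the first `n` coordinates. -/
noncomputable def primeVec {n : ℕ} (Y : EuclideanSpace ℝ (Fin (n + 1))) :
    EuclideanSpace ℝ (Fin n) :=
  (WithLp.equiv 2 (Fin n → ℝ)).symm (fun i => Y i.castSucc)

lemma primeVec_apply {n : ℕ} (Y : EuclideanSpace ℝ (Fin (n + 1))) (i : Fin n) :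
    primeVec Y i = Y i.castSucc := rfl

lemma primeNorm_eq_norm {n : ℕ} (Y : EuclideanSpace ℝ (Fin (n + 1))) :
    primeNorm Y = ‖primeVec Y‖ := by
  rw [primeNorm, EuclideanSpace.norm_eq]
  congr 1
  refine Finset.sum_congr rfl fun i _ => ?_
  rw [Real.norm_eq_abs, sq_abs]
  rfl

lemma key_identity (κ M xn mbn mhn xj mbj mhj t bb bh D : ℝ)
    (hκ : κ ≠ 0) (hxn : xn ≠ 0) (hD : D ≠ 0) (hmbn : mbn ≠ 0) (hmhn : mhn ≠ 0)
    (hDeq : D * κ = (1 - bb - bh) * xn + κ * bb * mbn + κ * bh * mhn) :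
    t * xj + (M - t * xn) / D * ((1 - bb - bh) / κ * xj + bb * mbj + bh * mhj)
      = bb * mbn / D * (t * xj + (M - t * xn) / mbn * mbj) +
        bh * mhn / D * (t * xj + (M - t * xn) / mhn * mhj) +
        (1 - bb - bh) / κ * xn / D * (M / xn * xj) := by
  field_simp
  linear_combination (t * xj) * hDeq

/-- The flat disk target `Σ = {(Y′, M) : |Y′| ≤ R}` is convex with respect to the curves
`[m̄, m̂]_{x₀}`: any point `m` on the spherical curve joining `m̄` and `m̂` through the external
point `x₀/κ` gives a ray `X₀ + s·m` that hits the disk. -/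
theorem flat_disk_target_convexity {n : ℕ} (κ M R : ℝ)
    (hκ0 : 0 < κ) (hκ1 : κ < 1) (hM : 0 < M) (hR : 0 < R)
    (x₀ mbar mhat : EuclideanSpace ℝ (Fin (n + 1)))
    (hx₀ : ‖x₀‖ = 1) (hmbar : ‖mbar‖ = 1) (hmhat : ‖mhat‖ = 1)
    (hx₀n : 0 < x₀ (Fin.last n)) (hmbarn : 0 < mbar (Fin.last n))
    (hmhatn : 0 < mhat (Fin.last n))
    (hangbar : ⟪mbar, x₀⟫ ≥ κ) (hanghat : ⟪mhat, x₀⟫ ≥ κ)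
    (hx₀prime : primeNorm x₀ / x₀ (Fin.last n) ≤ R / M)
    (X₀ : EuclideanSpace ℝ (Fin (n + 1))) (hX₀ : X₀ = ‖X₀‖ • x₀)
    (hX₀n : X₀ (Fin.last n) < M)
    (sbar shat : ℝ)
    (Ybar Yhat : EuclideanSpace ℝ (Fin (n + 1)))
    (hYbar : Ybar = X₀ + sbar • mbar) (hYhat : Yhat = X₀ + shat • mhat)
    (hYbarn : Ybar (Fin.last n) = M) (hYhatn : Yhat (Fin.last n) = M)
    (hYbarprime : primeNorm Ybar ≤ R) (hYhatprime : primeNorm Yhat ≤ R)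
    (βbar βhat : ℝ) (hβbar : 0 ≤ βbar) (hβhat : 0 ≤ βhat) (hβsum : βbar + βhat ≤ 1)
    (m : EuclideanSpace ℝ (Fin (n + 1)))
    (hm : m = κ⁻¹ • x₀ + βbar • (mbar - κ⁻¹ • x₀) + βhat • (mhat - κ⁻¹ • x₀))
    (hmunit : ‖m‖ = 1) (hmn : 0 < m (Fin.last n))
    (Y : EuclideanSpace ℝ (Fin (n + 1)))
    (hY : Y = X₀ + ((M - X₀ (Fin.last n)) / m (Fin.last n)) • m) :
    Y (Fin.last n) = M ∧ primeNorm Y ≤ R := by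
  set N := Fin.last n with hNdef
  have hκ' : κ ≠ 0 := ne_of_gt hκ0
  have hmn' : m N ≠ 0 := ne_of_gt hmn
  have hmbn' : mbar N ≠ 0 := ne_of_gt hmbarn
  have hmhn' : mhat N ≠ 0 := ne_of_gt hmhatn
  have hxn' : x₀ N ≠ 0 := ne_of_gt hx₀n
  set t : ℝ := ‖X₀‖ with htdef
  -- coordinates of X₀
  have hXc : ∀ j, X₀ j = t * x₀ j := fun j => by rw [hX₀]; rfl
  -- coordinates of m
  have hmc : ∀ j, m j = (1 - βbar - βhat) / κ * x₀ j + βbar * mbar j + βhat * mhat j := by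
    intro j
    rw [hm]
    show κ⁻¹ * x₀ j + βbar * (mbar j - κ⁻¹ * x₀ j) + βhat * (mhat j - κ⁻¹ * x₀ j) = _
    field_simp
    ring
  -- the first claim
  have hYn : Y N = M := by
    have h : Y N = X₀ N + (M - X₀ N) / m N * m N := by rw [hY]; rfl
    rw [h]
    field_simp
    ring
  refine ⟨hYn, ?_⟩
  -- equation for m N
  have hDeq : m N * κ = (1 - βbar - βhat) * x₀ N + κ * βbar * mbar N + κ * βhat * mhat N := by
    have h := hmc N
    field_simp at h
    linarith [h]
  -- expressions for sbar, shat
  have hsb : sbar = (M - t * x₀ N) / mbar N := by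
    have h1 : X₀ N + sbar * mbar N = M := by rw [← hYbarn, hYbar]; rfl
    rw [hXc N] at h1
    field_simp
    linarith
  have hsh : shat = (M - t * x₀ N) / mhat N := by
    have h1 : X₀ N + shat * mhat N = M := by rw [← hYhatn, hYhat]; rfl
    rw [hXc N] at h1
    field_simp
    linarith
  -- the weights
  set a : ℝ := βbar * mbar N / m N with hadef
  set b : ℝ := βhat * mhat N / m N with hbdef
  set c : ℝ := (1 - βbar - βhat) / κ * x₀ N / m N with hcdef
  have ha0 : 0 ≤ a :=
    div_nonneg (mul_nonneg hβbar (le_of_lt hmbarn)) (le_of_lt hmn)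
  have hb0 : 0 ≤ b :=
    div_nonneg (mul_nonneg hβhat (le_of_lt hmhatn)) (le_of_lt hmn)
  have hc0 : 0 ≤ c :=
    div_nonneg (mul_nonneg (div_nonneg (by linarith) (le_of_lt hκ0)) (le_of_lt hx₀n))
      (le_of_lt hmn)
  have habc : a + b + c = 1 := by
    have h : a + b + c
        = ((1 - βbar - βhat) / κ * x₀ N + βbar * mbar N + βhat * mhat N) / m N := by
      rw [hadef, hbdef, hcdef]; ring
    rw [h, ← hmc N, div_self hmn']
  -- key decomposition
  have hdecomp : primeVec Y = a • primeVec Ybar + b • primeVec Yhat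
      + c • ((M / x₀ N) • primeVec x₀) := by
    ext i
    show Y i.castSucc = a * Ybar i.castSucc + b * Yhat i.castSucc
      + c * (M / x₀ N * x₀ i.castSucc)
    set j := i.castSucc with hjdef
    have hYj : Y j = X₀ j + (M - X₀ N) / m N * m j := by rw [hY]; rfl
    have hYbj : Ybar j = X₀ j + sbar * mbar j := by rw [hYbar]; rfl
    have hYhj : Yhat j = X₀ j + shat * mhat j := by rw [hYhat]; rfl
    rw [hYj, hYbj, hYhj, hadef, hbdef, hcdef, hmc j, hXc j, hXc N, hsb, hsh]
    exact key_identity κ M (x₀ N) (mbar N) (mhat N) (x₀ j) (mbar j) (mhat j) t βbar βhat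
      (m N) hκ' hxn' hmn' hmbn' hmhn' hDeq
  -- norms
  have hWnorm : ‖(M / x₀ N) • primeVec x₀‖ ≤ R := by
    rw [norm_smul, Real.norm_eq_abs,
      abs_of_nonneg (div_nonneg (le_of_lt hM) (le_of_lt hx₀n)), ← primeNorm_eq_norm]
    rw [div_le_div_iff₀ hx₀n hM] at hx₀prime
    rw [div_mul_eq_mul_div, div_le_iff₀ hx₀n]
    linarith
  have hUnorm : ‖primeVec Ybar‖ ≤ R := by rw [← primeNorm_eq_norm]; exact hYbarprime
  have hVnorm : ‖primeVec Yhat‖ ≤ R := by rw [← primeNorm_eq_norm]; exact hYhatprime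
  rw [primeNorm_eq_norm, hdecomp]
  set U := primeVec Ybar
  set V := primeVec Yhat
  set W := (M / x₀ N) • primeVec x₀
  calc ‖a • U + b • V + c • W‖ ≤ ‖a • U + b • V‖ + ‖c • W‖ := norm_add_le _ _
    _ ≤ ‖a • U‖ + ‖b • V‖ + ‖c • W‖ := by linarith [norm_add_le (a • U) (b • V)]
    _ = a * ‖U‖ + b * ‖V‖ + c * ‖W‖ := by
        rw [norm_smul, norm_smul, norm_smul, Real.norm_eq_abs, Real.norm_eq_abs,
          Real.norm_eq_abs, abs_of_nonneg ha0, abs_of_nonneg hb0, abs_of_nonneg hc0]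
    _ ≤ a * R + b * R + c * R := by
        gcongr <;> first | assumption | skip
    _ = R := by rw [← add_mul, ← add_mul, habc, one_mul]
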